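/- arXiv:1801.04492 — 4 statements merged into one kernel-verified Lean document; each statement's English description precedes it below -/
import Mathlib

section
/- Let κ > 1, s = 1/κ, β > 0, ω > 0, let P be the symmetric 3×3 matrix with entries a = −(1/β + 2)ω + 2(β+2) + β(s−1)/ω − 2(β+1)s, b = ((2β+1)(s−1) + ω)/2, c = β − ω(s+ω−1)/(2β(s−1)) − (β+1)s − ω + 1, d = (1−s)β, e = ω − (1−s)β, f = ω²/(β(1−s)), and set H = −G(P), written in 2×2 blocks H = [[H₁, H₂], [H₂ᵀ, H₃]]. Then the bottom-right block satisfies H₃ = [[ω³/(β(1−s)), −ω], [−ω, β(1−s)/ω]]; this matrix has eigenvalues 0 and (β(1−s) + ω⁴/(β(1−s)))/ω, and it is positive semidefinite. -/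
open Matrix

/-- The polynomial `Q(ω; κ, β)` from equation (8) of the paper. -/
noncomputable def Qpoly (ω κ β : ℝ) : ℝ :=
  -4*(1-κ)^2*β^2*(ω-2) + ω*(κ-1+κ*ω)^2 - 4*(1-κ)*β*ω*(-3*κ+1+κ*ω)

/-- The matrix `Â` (with `L = 1`). -/
noncomputable def Ahat (β : ℝ) : Matrix (Fin 3) (Fin 3) ℝ :=
  !![β+1, -β, 0; 1, 0, 0; -(β+1), β, 0]

/-- The matrix `B̂` (with `α = 1`). -/
noncomputable def Bhat : Matrix (Fin 3) (Fin 1) ℝ := !![-1; 0; 1]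

/-- The 2×4 matrix `[Ĉ D̂]` (with `L = 1`, `m = s`, `ρ² = ω`). -/
noncomputable def CDhat (s β ω : ℝ) : Matrix (Fin 2) (Fin 4) ℝ :=
  !![β+1, -β, ω, -1; -s*(β+1), s*β, 0, 1]

/-- The matrix `M`. -/
noncomputable def Mmat : Matrix (Fin 2) (Fin 2) ℝ := !![0, 1; 1, 0]

/-- The 4×4 matrix `G(P)` of the IQC linear matrix inequality, specialized to
`λ = α = L = 1`, `m = s`, `ρ² = τ² = ω`. -/
noncomputable def Gmat (s β ω : ℝ) (P : Matrix (Fin 3) (Fin 3) ℝ) :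
    Matrix (Fin 4) (Fin 4) ℝ :=
  (Matrix.reindex finSumFinEquiv finSumFinEquiv
    (Matrix.fromBlocks ((Ahat β)ᵀ * P * (Ahat β) - ω • P) ((Ahat β)ᵀ * P * Bhat)
      (Bhatᵀ * P * (Ahat β)) (Bhatᵀ * P * Bhat)))
  + (CDhat s β ω)ᵀ * Mmat * (CDhat s β ω)

/-- The symmetric matrix `P` with entries given by equations (9)-(14) of the paper. -/
noncomputable def Pmat (s β ω : ℝ) : Matrix (Fin 3) (Fin 3) ℝ :=
  !![-(1/β+2)*ω + 2*(β+2) + β*(s-1)/ω - 2*(β+1)*s,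
     ((2*β+1)*(s-1) + ω)/2,
     β - ω*(s+ω-1)/(2*β*(s-1)) - (β+1)*s - ω + 1;
     ((2*β+1)*(s-1) + ω)/2,
     (1-s)*β,
     ω - (1-s)*β;
     β - ω*(s+ω-1)/(2*β*(s-1)) - (β+1)*s - ω + 1,
     ω - (1-s)*β,
     ω^2/(β*(1-s))]

/-- The bottom-right 2×2 block `H₃` of `H = -G(P)`: `H₃ i j = H (i+2) (j+2)`. -/
noncomputable def H3blk (s β ω : ℝ) (P : Matrix (Fin 3) (Fin 3) ℝ) :
    Matrix (Fin 2) (Fin 2) ℝ :=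
  (-(Gmat s β ω P)).submatrix (Fin.natAdd 2) (Fin.natAdd 2)

theorem Gentries (s β ω : ℝ) (P : Matrix (Fin 3) (Fin 3) ℝ) :
    Gmat s β ω P (Fin.natAdd 2 (0 : Fin 2)) (Fin.natAdd 2 (0 : Fin 2)) = -(ω * P 2 2) ∧
    Gmat s β ω P (Fin.natAdd 2 (0 : Fin 2)) (Fin.natAdd 2 (1 : Fin 2)) = ω ∧
    Gmat s β ω P (Fin.natAdd 2 (1 : Fin 2)) (Fin.natAdd 2 (0 : Fin 2)) = ω ∧
    Gmat s β ω P (Fin.natAdd 2 (1 : Fin 2)) (Fin.natAdd 2 (1 : Fin 2))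
      = P 0 0 - P 0 2 - P 2 0 + P 2 2 - 2 := by
  have h2 : (Fin.natAdd 2 (0:Fin 2) : Fin 4) = 2 := by decide
  have h3 : (Fin.natAdd 2 (1:Fin 2) : Fin 4) = 3 := by decide
  have e2 : (finSumFinEquiv.symm (2 : Fin 4) : Fin 3 ⊕ Fin 1) = Sum.inl 2 := by decide
  have e3 : (finSumFinEquiv.symm (3 : Fin 4) : Fin 3 ⊕ Fin 1) = Sum.inr 0 := by decide
  refine ⟨?_, ?_, ?_, ?_⟩ <;>
  · simp only [h2, h3]
    simp only [Gmat, Matrix.add_apply, Matrix.reindex_apply, Matrix.submatrix_apply, e2, e3]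
    simp [Ahat, Bhat, CDhat, Mmat, Matrix.mul_apply, Fin.sum_univ_succ, Matrix.fromBlocks]
    try ring

theorem H3blk_eq (s β ω : ℝ) (hs0 : 0 < s) (hs1 : s < 1) (hβ : 0 < β) (hω : 0 < ω) :
    H3blk s β ω (Pmat s β ω) = !![ω^3/(β*(1-s)), -ω; -ω, β*(1-s)/ω] := by
  have h1 : (1:ℝ) - s ≠ 0 := by linarith
  have h2 : s - 1 ≠ 0 := by linarith
  have hb := hβ.ne'
  have hw := hω.ne'
  obtain ⟨g00, g01, g10, g11⟩ := Gentries s β ω (Pmat s β ω)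
  rw [← Matrix.ext_iff, Fin.forall_fin_two]
  constructor <;> rw [Fin.forall_fin_two] <;> constructor <;>
    simp only [H3blk, Matrix.submatrix_apply, Matrix.neg_apply, g00, g01, g10, g11] <;>
    simp [Pmat] <;> field_simp <;> ring

theorem spec_aux (t ω : ℝ) (ht : 0 < t) (hω : 0 < ω) :
    spectrum ℝ (!![ω^3/t, -ω; -ω, t/ω] : Matrix (Fin 2) (Fin 2) ℝ)
      = {0, (t + ω^4/t)/ω} := by
  have htn := ht.ne'
  have hwn := hω.ne'
  ext μ
  rw [spectrum.mem_iff, Matrix.isUnit_iff_isUnit_det, isUnit_iff_ne_zero, ne_eq, not_not]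
  have hdet : (algebraMap ℝ (Matrix (Fin 2) (Fin 2) ℝ) μ
      - !![ω^3/t, -ω; -ω, t/ω]).det = μ * (μ - (t + ω^4/t)/ω) := by
    rw [Matrix.det_fin_two]
    simp [Matrix.algebraMap_matrix_apply, Matrix.one_apply]
    field_simp
    ring
  rw [hdet]
  constructor
  · intro h
    rcases mul_eq_zero.mp h with h | h
    · left; exact h
    · right
      simp only [Set.mem_singleton_iff]
      linarith [sub_eq_zero.mp h]
  · rintro (h | h) <;> simp_all

theorem psd_aux (t ω : ℝ) (ht : 0 < t) (hω : 0 < ω) :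
    (!![ω^3/t, -ω; -ω, t/ω] : Matrix (Fin 2) (Fin 2) ℝ).PosSemidef := by
  have htn := ht.ne'
  have hwn := hω.ne'
  refine Matrix.PosSemidef.of_dotProduct_mulVec_nonneg ?_ ?_
  · ext i j
    fin_cases i <;> fin_cases j <;> simp [Matrix.conjTranspose_apply]
  · intro x
    have key : star x ⬝ᵥ (!![ω^3/t, -ω; -ω, t/ω] : Matrix (Fin 2) (Fin 2) ℝ) *ᵥ x
        = (ω^2 * x 0 - t * x 1)^2 / (t*ω) := by
      simp [dotProduct, Matrix.mulVec, Fin.sum_univ_succ]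
      field_simp
      ring
    rw [key]
    positivity

/-- The bottom-right block `H₃` of `H = -G(P)` equals
`[[ω³/(β(1−s)), −ω], [−ω, β(1−s)/ω]]`, its eigenvalues (spectrum) are `0` and
`(β(1−s) + ω⁴/(β(1−s)))/ω`, and it is positive semidefinite. -/
theorem stmt1 (κ β ω : ℝ) (hκ : 1 < κ) (hβ : 0 < β) (hω : 0 < ω) :
    H3blk (1/κ) β ω (Pmat (1/κ) β ω) =
      !![ω^3/(β*(1-1/κ)), -ω; -ω, β*(1-1/κ)/ω] ∧
    spectrum ℝ (H3blk (1/κ) β ω (Pmat (1/κ) β ω)) =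
      {0, (β*(1-1/κ) + ω^4/(β*(1-1/κ)))/ω} ∧
    (H3blk (1/κ) β ω (Pmat (1/κ) β ω)).PosSemidef := by
  have hκ0 : (0:ℝ) < κ := by linarith
  have hs0 : 0 < 1/κ := by positivity
  have hs1 : 1/κ < 1 := by
    rw [div_lt_one hκ0]; linarith
  have ht : 0 < β * (1 - 1/κ) := by
    have : 0 < 1 - 1/κ := by linarith
    positivity
  have heq := H3blk_eq (1/κ) β ω hs0 hs1 hβ hω
  refine ⟨heq, ?_, ?_⟩
  · rw [heq]; exact spec_aux _ ω ht hω
  · rw [heq]; exact psd_aux _ ω ht hω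
end

section
/- Let κ > 1 and ω ∈ (0, 1). If there exists β ∈ ℝ with Q(ω; κ, β) = 0, then ω ≥ 1 − √(2κ−1)/κ. -/
/-- If `Q(ω; κ, β) = 0` admits a real solution `β` for some `ω ∈ (0,1)`,
then `ω ≥ 1 − √(2κ−1)/κ`. -/
theorem stmt6 (κ ω : ℝ) (hκ : 1 < κ) (hω0 : 0 < ω) (hω1 : ω < 1)
    (h : ∃ β : ℝ, Qpoly ω κ β = 0) :
    1 - Real.sqrt (2*κ - 1)/κ ≤ ω := by
  obtain ⟨β, hQ⟩ := h
  unfold Qpoly at hQ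
  have hκ0 : (0:ℝ) < κ := by linarith
  have h1ω : (0:ℝ) < 1 - ω := by linarith
  have ht : 0 < κ * (1 - ω) := by positivity
  have hk1 : (0:ℝ) < (κ-1)^2 := by nlinarith
  have hid : κ * (2*(-4*(1-κ)^2*(ω-2))*β + (-4*(1-κ)*ω*(-3*κ+1+κ*ω)))^2
      = 32*(1-κ)^2*ω*(κ*(1-ω))*((2*κ-1) - (κ*(1-ω))^2) := by
    linear_combination (4*κ*(-4*(1-κ)^2*(ω-2))) * hQ
  have key : (κ * (1 - ω))^2 ≤ 2*κ - 1 := by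
    by_contra hlt
    push_neg at hlt
    have hC : 0 < 32*(1-κ)^2*ω*(κ*(1-ω)) := by
      have h1k : (0:ℝ) < (1-κ)^2 := by nlinarith
      have := mul_pos (mul_pos (by linarith : (0:ℝ) < 32*(1-κ)^2) hω0) ht
      linarith [this]
    nlinarith [sq_nonneg (2*(-4*(1-κ)^2*(ω-2))*β + (-4*(1-κ)*ω*(-3*κ+1+κ*ω))),
      mul_pos hC (sub_pos.mpr hlt)]
  have hsq : κ * (1 - ω) ≤ Real.sqrt (2*κ - 1) := by
    rw [show κ * (1-ω) = Real.sqrt ((κ*(1-ω))^2) from (Real.sqrt_sq ht.le).symm]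
    exact Real.sqrt_le_sqrt key
  have : 1 - ω ≤ Real.sqrt (2*κ - 1)/κ := by
    rw [le_div_iff₀ hκ0]; linarith [hsq]
  linarith
end

section
/- For every κ > 1, with ω* = 1 − √(2κ−1)/κ and β* = (2κ − √(2κ−1) − 1)/(2(κ + √(2κ−1))), one has Q(ω*; κ, β*) = 0; moreover β* = ω*(κ(ω*−3)+1)/(2(κ−1)(ω*−2)). -/
/-- With `ω* = 1 − √(2κ−1)/κ` and `β* = (2κ − √(2κ−1) − 1)/(2(κ + √(2κ−1)))`,
one has `Q(ω*; κ, β*) = 0`, and `β* = ω*(κ(ω*−3)+1)/(2(κ−1)(ω*−2))`. -/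
theorem stmt7 (κ : ℝ) (hκ : 1 < κ) (ωs βs : ℝ)
    (hω : ωs = 1 - Real.sqrt (2*κ - 1)/κ)
    (hβ : βs = (2*κ - Real.sqrt (2*κ - 1) - 1)/(2*(κ + Real.sqrt (2*κ - 1)))) :
    Qpoly ωs κ βs = 0 ∧
    βs = ωs*(κ*(ωs - 3) + 1)/(2*(κ - 1)*(ωs - 2)) := by
  set s := Real.sqrt (2*κ - 1) with hsdef
  have hs2 : s^2 = 2*κ - 1 := Real.sq_sqrt (by linarith)
  have hs0 : 0 < s := Real.sqrt_pos.mpr (by linarith)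
  have hκ0 : κ ≠ 0 := by positivity
  have hden : κ + s ≠ 0 := by positivity
  have hκ1 : κ - 1 ≠ 0 := by intro h; linarith
  have hω2 : (1 - s/κ) - 2 ≠ 0 := by
    have : s/κ > 0 := by positivity
    intro h; linarith
  subst hω hβ
  unfold Qpoly
  constructor
  · field_simp
    linear_combination (4*s - 4*s^3 + 4*κ - 8*κ*s + 4*κ*s^2 - 8*κ^2 + 8*κ^2*s) * hs2
  · have hD : 2*(κ-1)*((1 - s/κ) - 2) ≠ 0 :=
      mul_ne_zero (mul_ne_zero two_ne_zero hκ1) hω2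
    rw [eq_div_iff hD]
    field_simp
    linear_combination (-1*s - κ) * hs2
end

section
/- Let κ > 1, s = 1/κ, β > 0, and ω ∈ (0, 1) with Q(ω; κ, β) = 0, and let P = [[a, b, c], [b, d, e], [c, e, f]] be the symmetric 3×3 matrix with entries a = −(1/β + 2)ω + 2(β+2) + β(s−1)/ω − 2(β+1)s, b = ((2β+1)(s−1) + ω)/2, c = β − ω(s+ω−1)/(2β(s−1)) − (β+1)s − ω + 1, d = (1−s)β, e = ω − (1−s)β, f = ω²/(β(1−s)). Then f = κω²/(β(κ−1)), d·f − e² = β(κ−1)(β(1−κ) + 2κω)/κ², and det P = β²(κ−1)²((ω−1)(β(1−κ)+κω)+ω)/(κ³ω). -/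
open Matrix

set_option maxHeartbeats 4000000

/-- The three leading principal minors of `P` (after permuting rows/columns) used in
the proof of Theorem 4: `f = κω²/(β(κ−1))`, `df − e² = β(κ−1)(β(1−κ)+2κω)/κ²`, and
`det P = β²(κ−1)²((ω−1)(β(1−κ)+κω)+ω)/(κ³ω)`. -/
theorem stmt10 (κ β ω : ℝ) (hκ : 1 < κ) (hβ : 0 < β) (hω0 : 0 < ω) (hω1 : ω < 1)
    (hQ : Qpoly ω κ β = 0) :
    Pmat (1/κ) β ω 2 2 = κ*ω^2/(β*(κ-1)) ∧
    Pmat (1/κ) β ω 1 1 * Pmat (1/κ) β ω 2 2 - (Pmat (1/κ) β ω 1 2)^2 =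
      β*(κ-1)*(β*(1-κ) + 2*κ*ω)/κ^2 ∧
    (Pmat (1/κ) β ω).det =
      β^2*(κ-1)^2*((ω-1)*(β*(1-κ) + κ*ω) + ω)/(κ^3*ω) := by
  have hκ0 : κ ≠ 0 := by linarith
  have hκ1 : κ - 1 ≠ 0 := by linarith
  have hβ0 : β ≠ 0 := ne_of_gt hβ
  have hω : ω ≠ 0 := ne_of_gt hω0
  have hs1 : 1/κ - 1 ≠ 0 := by
    intro h
    apply hκ1
    field_simp at h
    linarith
  have h1s : 1 - 1/κ ≠ 0 := by intro h; apply hs1; linarith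
  have h1κ : (1:ℝ) - κ ≠ 0 := by intro h; apply hκ1; linarith
  have h2 : β*2 - β*κ*2 ≠ 0 := by
    have e : β*2 - β*κ*2 = (2*β)*(1-κ) := by ring
    rw [e]; exact mul_ne_zero (by positivity) h1κ
  have h3 : β - β*κ ≠ 0 := by
    have e : β - β*κ = β*(1-κ) := by ring
    rw [e]; exact mul_ne_zero hβ0 h1κ
  refine ⟨?_, ?_, ?_⟩
  · show ω^2/(β*(1-1/κ)) = _
    field_simp
  · show (1-1/κ)*β * (ω^2/(β*(1-1/κ))) - (ω - (1-1/κ)*β)^2 = _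
    field_simp
    ring
  · have key : (Pmat (1/κ) β ω).det =
        β^2*(κ-1)^2*((ω-1)*(β*(1-κ) + κ*ω) + ω)/(κ^3*ω) - Qpoly ω κ β / (2*κ^2) := by
      rw [det_fin_three]
      simp only [Pmat, Qpoly, Matrix.of_apply, Matrix.cons_val', Matrix.cons_val_zero, Matrix.cons_val_one,
        Matrix.head_cons, Matrix.head_fin_const, Matrix.cons_val_fin_one, Matrix.empty_val',
        Matrix.cons_val_two, Matrix.tail_cons]
      field_simp
      ring
    rw [key, hQ]
    ring
end
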